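/- For a prime power q = p^s and positive integer a, the degree-one power sum satisfies S_1(a) = (-1)^a / [1]^a · (1 + ∑_{i=1}^{⌊(a-1)/q⌋} binom(a-1-i(q-1), i) (-1)^i [1]^{i(q-1)}), where [1] = t^q - t. -/

import Mathlib

open Polynomial Finset

noncomputable def TT (q : ℕ) (F : Type) [Field F] (a : ℕ) : RatFunc F :=
  ∑ i ∈ Finset.range a,
    (Nat.choose (a - 1 - i * (q - 1)) i : RatFunc F) * (-1) ^ i *
      (RatFunc.X ^ q - RatFunc.X) ^ (i * (q - 1))

lemma pascal_key (q a i : ℕ) (hq : 2 ≤ q) (ha : q < a) (hi : 1 ≤ i) :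
    (a-1-i*(q-1)).choose i
      = (a-1-1-i*(q-1)).choose i + (a-q-1-(i-1)*(q-1)).choose (i-1) := by
  obtain ⟨j, rfl⟩ : ∃ j, i = j + 1 := ⟨i-1, by omega⟩
  simp only [Nat.add_sub_cancel]
  have hmul : (j+1)*(q-1) = j*(q-1) + (q-1) := by ring
  set m := (j+1)*(q-1) with hm
  set n := j*(q-1) with hn
  rcases le_or_gt m (a-2) with h | h
  · have h1 : a-1-m = (a-1-1-m) + 1 := by omega
    have h2 : a-q-1-n = a-1-1-m := by omega
    rw [h1, h2, Nat.choose_succ_succ, add_comm]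
  · have e1 : a-1-m = 0 := by omega
    have e2 : a-1-1-m = 0 := by omega
    rw [e1, e2, Nat.choose_zero_succ, zero_add]
    match j, hn with
    | 0, hn => omega
    | (j'+1), hn =>
      have hn2 : n = j'*(q-1) + (q-1) := by rw [hn]; ring
      have e3 : a-q-1-n = 0 := by omega
      rw [e3, Nat.choose_zero_succ]

lemma TT_one (q : ℕ) (F : Type) [Field F] (a : ℕ) (ha : 1 ≤ a) (haq : a ≤ q) :
    TT q F a = 1 := by
  rw [TT, Finset.sum_eq_single 0]
  · simp
  · intro i _ hi0
    have hi : 1 ≤ i := Nat.one_le_iff_ne_zero.mpr hi0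
    have : a - 1 - i * (q - 1) = 0 := by
      have : q - 1 ≤ i * (q - 1) := Nat.le_mul_of_pos_left _ (by omega)
      omega
    rw [this]
    obtain ⟨j, rfl⟩ : ∃ j, i = j + 1 := ⟨i-1, by omega⟩
    simp
  · intro h; exact absurd (Finset.mem_range.mpr (by omega)) h

lemma TT_rec (q : ℕ) (F : Type) [Field F] (hq : 2 ≤ q) (a : ℕ) (ha : q < a) :
    TT q F a = TT q F (a-1) - (RatFunc.X ^ q - RatFunc.X)^(q-1) * TT q F (a-q) := by
  set D := (RatFunc.X ^ q - RatFunc.X : RatFunc F) with hDdef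
  have hrange : ∀ b : ℕ, 1 ≤ b → Finset.range b = insert 0 (Finset.Ico 1 b) := by
    intro b hb; ext x; simp only [Finset.mem_Ico, Finset.mem_range, Finset.mem_insert]; omega
  have h1 : TT q F a = 1 + ∑ i ∈ Finset.Ico 1 a,
      (Nat.choose (a-1-i*(q-1)) i : RatFunc F) * (-1)^i * D^(i*(q-1)) := by
    rw [TT, hrange a (by omega), Finset.sum_insert (by simp)]
    simp [hDdef]
  have h2 : TT q F (a-1) = 1 + ∑ i ∈ Finset.Ico 1 a,
      (Nat.choose (a-1-1-i*(q-1)) i : RatFunc F) * (-1)^i * D^(i*(q-1)) := by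
    rw [TT, hrange (a-1) (by omega), Finset.sum_insert (by simp)]
    rw [Finset.sum_subset (Finset.Ico_subset_Ico_right (by omega : a - 1 ≤ a))]
    · simp [hDdef]
    · intro i hi hi2
      simp only [Finset.mem_Ico] at hi hi2
      have : a-1-1-i*(q-1) < i := by
        have : a-1-1-i*(q-1) ≤ a - 2 := by omega
        omega
      rw [Nat.choose_eq_zero_of_lt this, Nat.cast_zero, zero_mul, zero_mul]
  have h3 : -(D^(q-1) * TT q F (a-q)) = ∑ i ∈ Finset.Ico 1 a,
      (Nat.choose (a-q-1-(i-1)*(q-1)) (i-1) : RatFunc F) * (-1)^i * D^(i*(q-1)) := by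
    rw [← Finset.sum_subset (Finset.Ico_subset_Ico_right (by omega : a - q + 1 ≤ a))]
    · rw [Finset.sum_Ico_eq_sum_range]
      have : a - q + 1 - 1 = a - q := by omega
      rw [this, TT, Finset.mul_sum, ← Finset.sum_neg_distrib]
      apply Finset.sum_congr rfl
      intro j hj
      have e1 : 1 + j - 1 = j := by omega
      have e2 : (1+j)*(q-1) = (q-1) + j*(q-1) := by ring
      rw [e1, e2, pow_add]
      ring
    · intro i hi hi2
      simp only [Finset.mem_Ico] at hi hi2
      have : a-q-1-(i-1)*(q-1) < i - 1 := by
        have h4 : a-q-1-(i-1)*(q-1) ≤ a-q-1 := by omega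
        omega
      rw [Nat.choose_eq_zero_of_lt this, Nat.cast_zero, zero_mul, zero_mul]
  rw [h1, h2, sub_eq_add_neg, h3, add_assoc, ← Finset.sum_add_distrib]
  congr 1
  apply Finset.sum_congr rfl
  intro i hi
  simp only [Finset.mem_Ico] at hi
  rw [pascal_key q a i hq ha hi.1]
  push_cast
  ring

lemma sum_pow_card_sub_one (F : Type) [Field F] [Fintype F] :
    ∑ x : F, x ^ (Fintype.card F - 1) = -1 := by
  classical
  have h2 : 2 ≤ Fintype.card F := Fintype.one_lt_card
  let φ : Fˣ ↪ F := ⟨fun x ↦ x, Units.val_injective⟩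
  have huniv : (univ : Finset Fˣ).map φ = univ \ {0} := by
    ext x
    simpa only [mem_map, mem_univ, Function.Embedding.coeFn_mk, true_and, mem_sdiff,
      mem_singleton, φ] using (Units.exists_iff_ne_zero (p := (· = x))).trans (by simp)
  calc
    ∑ x : F, x ^ (Fintype.card F - 1)
        = ∑ x ∈ univ \ {(0 : F)}, x ^ (Fintype.card F - 1) := by
        rw [← sum_sdiff ({0} : Finset F).subset_univ, sum_singleton,
          zero_pow (by omega), add_zero]
    _ = ∑ x : Fˣ, (x ^ (Fintype.card F - 1) : F) := by
        simp [φ, ← huniv, univ.sum_map φ]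
    _ = -1 := by rw [FiniteField.sum_pow_units F _, if_pos dvd_rfl]

lemma sum_C_pow (F : Type) [Field F] [Fintype F] (q j : ℕ) (hF : Fintype.card F = q)
    (hj : j < q - 1) : ∑ θ : F, (RatFunc.C θ) ^ j = 0 := by
  have : ∑ θ : F, (RatFunc.C θ) ^ j = RatFunc.C (∑ θ : F, θ ^ j) := by
    rw [map_sum]; simp [map_pow]
  rw [this, FiniteField.sum_pow_lt_card_sub_one F j (by omega), map_zero]

lemma sum_shift_pow_zero (F : Type) [Field F] [Fintype F] (q m : ℕ)
    (hF : Fintype.card F = q) (hm : m + 2 ≤ q) :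
    ∑ θ : F, (RatFunc.X + RatFunc.C θ) ^ m = 0 := by
  simp_rw [add_pow]
  rw [Finset.sum_comm]
  apply Finset.sum_eq_zero
  intro k hk
  have hz : ∑ θ : F, (RatFunc.C θ) ^ (m - k) = 0 :=
    sum_C_pow F q (m-k) hF (by omega)
  calc ∑ θ : F, RatFunc.X ^ k * (RatFunc.C θ) ^ (m-k) * (m.choose k : RatFunc F)
      = RatFunc.X ^ k * (∑ θ : F, (RatFunc.C θ) ^ (m-k)) * (m.choose k : RatFunc F) := by
        rw [Finset.mul_sum, Finset.sum_mul]
    _ = 0 := by rw [hz, mul_zero, zero_mul]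

lemma sum_shift_pow_top (F : Type) [Field F] [Fintype F] (q : ℕ)
    (hF : Fintype.card F = q) (hq : 2 ≤ q) :
    ∑ θ : F, (RatFunc.X + RatFunc.C θ) ^ (q - 1) = -1 := by
  simp_rw [add_pow]
  rw [Finset.sum_comm]
  rw [Finset.sum_eq_single 0]
  · have h1 : ∑ θ : F, (RatFunc.C θ) ^ (q - 1 - 0) = -1 := by
      have h2 : ∑ θ : F, (RatFunc.C θ) ^ (q-1) = RatFunc.C (∑ θ : F, θ ^ (q-1)) := by
        rw [map_sum]; simp [map_pow]
      rw [Nat.sub_zero, h2, ← hF, sum_pow_card_sub_one F, map_neg, map_one]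
    calc ∑ θ : F, RatFunc.X ^ 0 * (RatFunc.C θ) ^ (q-1-0) * ((q-1).choose 0 : RatFunc F)
        = RatFunc.X ^ 0 * (∑ θ : F, (RatFunc.C θ) ^ (q-1-0)) * ((q-1).choose 0 : RatFunc F) := by
          rw [Finset.mul_sum, Finset.sum_mul]
      _ = -1 := by rw [h1]; simp
  · intro k hk hk0
    simp only [Finset.mem_range] at hk
    have hz : ∑ θ : F, (RatFunc.C θ) ^ (q - 1 - k) = 0 :=
      sum_C_pow F q (q-1-k) hF (by omega)
    calc ∑ θ : F, RatFunc.X ^ k * (RatFunc.C θ) ^ (q-1-k) * ((q-1).choose k : RatFunc F)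
        = RatFunc.X ^ k * (∑ θ : F, (RatFunc.C θ) ^ (q-1-k)) * ((q-1).choose k : RatFunc F) := by
          rw [Finset.mul_sum, Finset.sum_mul]
      _ = 0 := by rw [hz, mul_zero, zero_mul]
  · intro h; exact absurd (Finset.mem_range.mpr (by omega)) h

/-- For `q = p^s` a prime power, `a ≥ 1`,
`S_1(a) = (-1)^a/[1]^a · (1 + ∑_{i=1}^{⌊(a-1)/q⌋} C(a-1-i(q-1), i)(-1)^i [1]^{i(q-1)})`
in `F_q(t)`, where `[1] = t^q - t`. -/
theorem stmt_0 (p s q : ℕ) (hp : p.Prime) (hs : 0 < s) (hq : q = p ^ s)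
    {F : Type} [Field F] [Fintype F] (hF : Fintype.card F = q)
    (a : ℕ) (ha : 1 ≤ a) :
    (∑ θ : F, ((RatFunc.X + RatFunc.C θ) ^ a)⁻¹) =
      (-1 : RatFunc F) ^ a / (RatFunc.X ^ q - RatFunc.X) ^ a *
        (1 + ∑ i ∈ Finset.Icc 1 ((a - 1) / q),
          ((Nat.choose (a - 1 - i * (q - 1)) i : RatFunc F) * (-1) ^ i *
            (RatFunc.X ^ q - RatFunc.X) ^ (i * (q - 1)))) := by
  haveI hfact : Fact p.Prime := ⟨hp⟩
  have hq2 : 2 ≤ q := by rw [hq]; calc 2 ≤ p := hp.two_le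
                                       _ ≤ p ^ s := Nat.le_self_pow (by omega) p
  -- characteristic
  haveI hrc : CharP F (ringChar F) := ringChar.charP F
  obtain ⟨n, hn⟩ := FiniteField.card F (ringChar F)
  have hrp : ringChar F = p := by
    have h1 : p ∣ (ringChar F) ^ (n : ℕ) := by
      rw [← hn.2, hF, hq]; exact dvd_pow_self p (by omega)
    have h2 : p ∣ ringChar F := hp.dvd_of_dvd_pow h1
    exact ((Nat.prime_dvd_prime_iff_eq hp hn.1).mp h2).symm
  haveI hchF : CharP F p := hrp ▸ hrc
  haveI hchR : CharP (RatFunc F) p :=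
    charP_of_injective_algebraMap (algebraMap F (RatFunc F)).injective p
  set D := (RatFunc.X ^ q - RatFunc.X : RatFunc F) with hDdef
  -- frobenius
  have hfrob : ∀ θ : F, (RatFunc.X + RatFunc.C θ) ^ q = RatFunc.X ^ q + RatFunc.C θ := by
    intro θ
    haveI : ExpChar (RatFunc F) p := ExpChar.prime hp
    rw [hq, add_pow_char_pow]
    congr 1
    rw [← map_pow, ← hq, ← hF, FiniteField.pow_card]
  have huq : ∀ θ : F, (RatFunc.X + RatFunc.C θ) ^ q = (RatFunc.X + RatFunc.C θ) + D := by
    intro θ; rw [hfrob θ, hDdef]; ring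
  -- nonvanishing
  have hu0 : ∀ θ : F, RatFunc.X + RatFunc.C θ ≠ 0 := by
    intro θ
    rw [← RatFunc.algebraMap_X, ← RatFunc.algebraMap_C θ, ← map_add]
    exact RatFunc.algebraMap_ne_zero (Polynomial.X_add_C_ne_zero θ)
  have hD : D ≠ 0 := by
    rw [hDdef, ← RatFunc.algebraMap_X, ← map_pow, ← map_sub]
    apply RatFunc.algebraMap_ne_zero
    intro h
    have := congrArg (fun r => Polynomial.coeff r 1) h
    simp only [Polynomial.coeff_sub, Polynomial.coeff_X_pow,
      Polynomial.coeff_X_one, Polynomial.coeff_zero] at this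
    rw [if_neg (by omega)] at this
    norm_num at this
  -- sign
  have hsign : (-1 : RatFunc F) ^ q = -1 := by
    by_cases hp2 : p = 2
    · have h2 : (2 : RatFunc F) = 0 := by
        have := CharP.cast_eq_zero (RatFunc F) p
        rw [hp2] at this; exact_mod_cast this
      have hm : (-1 : RatFunc F) = 1 := by linear_combination -h2
      rw [hm, one_pow]
    · have : Odd q := by rw [hq]; exact (hp.odd_of_ne_two hp2).pow
      exact this.neg_one_pow
  -- cardinality cast
  have hq0 : (q : RatFunc F) = 0 := by
    rw [hq, Nat.cast_pow, CharP.cast_eq_zero (RatFunc F) p, zero_pow (by omega)]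
  -- pointwise identities
  have base : ∀ θ : F, (RatFunc.X + RatFunc.C θ)⁻¹
      = D⁻¹ * ((RatFunc.X + RatFunc.C θ)^(q-1) - 1) := by
    intro θ
    set u := RatFunc.X + RatFunc.C θ with hu
    have h1 : (u^(q-1) - 1) * u = D := by
      rw [sub_mul, ← pow_succ, show q-1+1 = q by omega, huq θ]; ring
    refine inv_eq_of_mul_eq_one_left ?_
    rw [mul_assoc, h1, inv_mul_cancel₀ hD]
  have small : ∀ θ : F, ∀ A : ℕ, 2 ≤ A → A ≤ q →
      ((RatFunc.X + RatFunc.C θ)^A)⁻¹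
        = D⁻¹ * ((RatFunc.X + RatFunc.C θ)^(q-A) - ((RatFunc.X + RatFunc.C θ)^(A-1))⁻¹) := by
    intro θ A h2 hAq
    set u := RatFunc.X + RatFunc.C θ with hu
    refine inv_eq_of_mul_eq_one_left ?_
    have e1 : u^(q-A) * u^A = u + D := by rw [← pow_add, show q-A+A = q by omega, huq θ]
    have e2 : (u^(A-1))⁻¹ * u^A = u := by
      have h3 : u^A = u^(A-1) * u := by rw [← pow_succ]; congr 1; omega
      rw [h3, ← mul_assoc, inv_mul_cancel₀ (pow_ne_zero _ (hu0 θ)), one_mul]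
    rw [mul_assoc, sub_mul, e1, e2, show u + D - u = D by ring, inv_mul_cancel₀ hD]
  have big : ∀ θ : F, ∀ A : ℕ, q < A →
      ((RatFunc.X + RatFunc.C θ)^A)⁻¹
        = D⁻¹ * (((RatFunc.X + RatFunc.C θ)^(A-q))⁻¹ - ((RatFunc.X + RatFunc.C θ)^(A-1))⁻¹) := by
    intro θ A hA
    set u := RatFunc.X + RatFunc.C θ with hu
    refine inv_eq_of_mul_eq_one_left ?_
    have e1 : (u^(A-q))⁻¹ * u^A = u + D := by
      have h3 : u^A = u^(A-q) * u^q := by rw [← pow_add]; congr 1; omega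
      rw [h3, ← mul_assoc, inv_mul_cancel₀ (pow_ne_zero _ (hu0 θ)), one_mul, huq θ]
    have e2 : (u^(A-1))⁻¹ * u^A = u := by
      have h3 : u^A = u^(A-1) * u := by rw [← pow_succ]; congr 1; omega
      rw [h3, ← mul_assoc, inv_mul_cancel₀ (pow_ne_zero _ (hu0 θ)), one_mul]
    rw [mul_assoc, sub_mul, e1, e2, show u + D - u = D by ring, inv_mul_cancel₀ hD]
  -- main induction
  have main : ∀ A : ℕ, 1 ≤ A →
      (∑ θ : F, ((RatFunc.X + RatFunc.C θ) ^ A)⁻¹) = (-1)^A * (D⁻¹)^A * TT q F A := by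
    intro A
    induction A using Nat.strong_induction_on with
    | _ A ih =>
      intro hA1
      rcases eq_or_lt_of_le hA1 with h1 | h1
      · -- A = 1
        rw [← h1]
        have : ∑ θ : F, ((RatFunc.X + RatFunc.C θ) ^ 1)⁻¹ = -D⁻¹ := by
          simp_rw [pow_one]
          calc ∑ θ : F, (RatFunc.X + RatFunc.C θ)⁻¹
              = ∑ θ : F, D⁻¹ * ((RatFunc.X + RatFunc.C θ)^(q-1) - 1) :=
                Finset.sum_congr rfl (fun θ _ => base θ)
            _ = D⁻¹ * ((∑ θ : F, (RatFunc.X + RatFunc.C θ)^(q-1)) - ∑ θ : F, (1 : RatFunc F)) := by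
                rw [← Finset.mul_sum, Finset.sum_sub_distrib]
            _ = -D⁻¹ := by
                rw [sum_shift_pow_top F q hF hq2, Finset.sum_const, Finset.card_univ, hF,
                  nsmul_eq_mul, mul_one, hq0]
                ring
        rw [this, TT_one q F 1 le_rfl (by omega)]
        ring
      · rcases le_or_gt A q with hAq | hAq
        · -- 2 ≤ A ≤ q
          obtain ⟨b, rfl⟩ : ∃ b, A = b + 1 := ⟨A-1, by omega⟩
          have hb1 : 1 ≤ b := by omega
          have hstep : ∑ θ : F, ((RatFunc.X + RatFunc.C θ) ^ (b+1))⁻¹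
              = -D⁻¹ * ∑ θ : F, ((RatFunc.X + RatFunc.C θ) ^ b)⁻¹ := by
            calc ∑ θ : F, ((RatFunc.X + RatFunc.C θ) ^ (b+1))⁻¹
                = ∑ θ : F, D⁻¹ * ((RatFunc.X + RatFunc.C θ)^(q-(b+1))
                    - ((RatFunc.X + RatFunc.C θ)^(b+1-1))⁻¹) :=
                  Finset.sum_congr rfl (fun θ _ => small θ (b+1) (by omega) hAq)
              _ = D⁻¹ * ((∑ θ : F, (RatFunc.X + RatFunc.C θ)^(q-(b+1)))
                    - ∑ θ : F, ((RatFunc.X + RatFunc.C θ)^b)⁻¹) := by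
                  rw [← Finset.mul_sum, Finset.sum_sub_distrib]
                  simp only [Nat.add_sub_cancel]
              _ = -D⁻¹ * ∑ θ : F, ((RatFunc.X + RatFunc.C θ) ^ b)⁻¹ := by
                  rw [sum_shift_pow_zero F q (q-(b+1)) hF (by omega), zero_sub]
                  ring
          rw [hstep, ih b (by omega) hb1, TT_one q F b hb1 (by omega),
            TT_one q F (b+1) (by omega) hAq, pow_succ, pow_succ]
          ring
        · -- q < A
          have hstep : ∑ θ : F, ((RatFunc.X + RatFunc.C θ) ^ A)⁻¹
              = D⁻¹ * ((∑ θ : F, ((RatFunc.X + RatFunc.C θ)^(A-q))⁻¹)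
                  - ∑ θ : F, ((RatFunc.X + RatFunc.C θ)^(A-1))⁻¹) := by
            calc ∑ θ : F, ((RatFunc.X + RatFunc.C θ) ^ A)⁻¹
                = ∑ θ : F, D⁻¹ * (((RatFunc.X + RatFunc.C θ)^(A-q))⁻¹
                    - ((RatFunc.X + RatFunc.C θ)^(A-1))⁻¹) :=
                  Finset.sum_congr rfl (fun θ _ => big θ A hAq)
              _ = _ := by rw [← Finset.mul_sum, Finset.sum_sub_distrib]
          rw [hstep, ih (A-q) (by omega) (by omega), ih (A-1) (by omega) (by omega),
            TT_rec q F hq2 A hAq]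
          obtain ⟨k, rfl⟩ : ∃ k, A = k + q := ⟨A - q, by omega⟩
          have ek1 : k + q - q = k := by omega
          have ek2 : k + q - 1 = k + (q-1) := by omega
          rw [ek1, ek2]
          have hsign1 : ((-1 : RatFunc F))^(q-1) = 1 := by
            have : ((-1 : RatFunc F))^(q-1) * (-1) = -1 := by
              rw [← pow_succ, show q-1+1 = q by omega, hsign]
            have := congrArg (fun r => r * (-1)) this
            simpa using this
          have hDq : (D⁻¹)^(q-1) * D^(q-1) = 1 := by
            rw [← mul_pow, inv_mul_cancel₀ hD, one_pow]
          have hq' : (D⁻¹ : RatFunc F)^q = (D⁻¹)^(q-1) * D⁻¹ := by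
            rw [← pow_succ]; congr 1; omega
          rw [pow_add ((-1 : RatFunc F)) k q, pow_add ((-1 : RatFunc F)) k (q-1),
            pow_add (D⁻¹) k q, pow_add (D⁻¹) k (q-1), hsign, hsign1, hq']
          linear_combination (-((-1 : RatFunc F)^k * (D⁻¹)^k * D⁻¹ * TT q F k)) * hDq
  -- conclude
  rw [main a ha]
  have hT : (1 : RatFunc F) + ∑ i ∈ Finset.Icc 1 ((a - 1) / q),
      ((Nat.choose (a - 1 - i * (q - 1)) i : RatFunc F) * (-1) ^ i * D ^ (i * (q - 1)))
      = TT q F a := by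
    have hsub : Finset.Icc 1 ((a-1)/q) ⊆ Finset.Ico 1 a := by
      intro i hi
      simp only [Finset.mem_Icc] at hi
      simp only [Finset.mem_Ico]
      have := Nat.div_le_self (a-1) q
      omega
    have hext : ∑ i ∈ Finset.Icc 1 ((a - 1) / q),
        ((Nat.choose (a - 1 - i * (q - 1)) i : RatFunc F) * (-1) ^ i * D ^ (i * (q - 1)))
        = ∑ i ∈ Finset.Ico 1 a,
        ((Nat.choose (a - 1 - i * (q - 1)) i : RatFunc F) * (-1) ^ i * D ^ (i * (q - 1))) := by
      apply Finset.sum_subset hsub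
      intro i hi hi2
      simp only [Finset.mem_Ico] at hi
      simp only [Finset.mem_Icc] at hi2
      have hgt : (a-1)/q < i := by omega
      have hlt : a - 1 < i * q := by
        rw [Nat.div_lt_iff_lt_mul (by omega)] at hgt
        omega
      have hrel : i * q = i * (q-1) + i := by
        calc i * q = i * ((q-1)+1) := by congr 1; omega
          _ = i * (q-1) + i := by ring
      have : a - 1 - i * (q-1) < i := by omega
      rw [Nat.choose_eq_zero_of_lt this, Nat.cast_zero, zero_mul, zero_mul]
    rw [hext, TT]
    have hrange : Finset.range a = insert 0 (Finset.Ico 1 a) := by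
      ext x; simp only [Finset.mem_Ico, Finset.mem_range, Finset.mem_insert]; omega
    rw [hrange, Finset.sum_insert (by simp)]
    simp [hDdef]
  rw [← hT, div_eq_mul_inv, inv_pow]
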